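/- arXiv:1912.00319 — 2 statements merged into one kernel-verified Lean document; each statement's English description precedes it below -/
import Mathlib

section
/- If |v_i| = |v_m| = 1 for all buses and θ satisfies the DC power flow equations ∑_m B_{im}(θ_i − θ_m) = p_l i − pg i at every bus i, and additionally the AC active power equations hold at every bus with the same p values, then ∑_i ∑_m G_{im} cos(θ_i − θ_m) = 0. -/
lemma anti_sum_zero (n : ℕ) (B : Fin n → Fin n → ℝ) (hB : ∀ i m, B i m = B m i)
    (f : ℝ → ℝ) (hf : ∀ x, f (-x) = - f x) (θ : Fin n → ℝ) :
    ∑ i, ∑ m, B i m * f (θ i - θ m) = 0 := by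
  have h : ∑ i, ∑ m, B i m * f (θ i - θ m)
      = - ∑ i, ∑ m, B i m * f (θ i - θ m) := by
    calc ∑ i, ∑ m, B i m * f (θ i - θ m)
        = ∑ i, ∑ m, -(B m i * f (θ m - θ i)) := by
          apply Finset.sum_congr rfl; intro i _
          apply Finset.sum_congr rfl; intro m _
          rw [hB i m]
          have h2 : θ i - θ m = -(θ m - θ i) := by ring
          rw [h2, hf]; ring
      _ = - ∑ i, ∑ m, B m i * f (θ m - θ i) := by
          simp [Finset.sum_neg_distrib]
      _ = - ∑ m, ∑ i, B m i * f (θ m - θ i) := by rw [Finset.sum_comm]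
  linarith

theorem ac_dc_both_hold_losses_zero (n : ℕ) (G B : Fin n → Fin n → ℝ) (θ : Fin n → ℝ)
    (p_l p_g : Fin n → ℝ)
    (hG : ∀ i m, G i m = G m i) (hB : ∀ i m, B i m = B m i)
    (hDC : ∀ i, ∑ m, B i m * (θ i - θ m) = p_l i - p_g i)
    (hAC : ∀ i, ∑ m, (G i m * Real.cos (θ i - θ m) + B i m * Real.sin (θ i - θ m))
      = p_l i - p_g i) :
    ∑ i, ∑ m, G i m * Real.cos (θ i - θ m) = 0 := by
  have hid : ∑ i, ∑ m, B i m * (θ i - θ m) = 0 :=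
    anti_sum_zero n B hB id (fun x => rfl) θ
  have hsin : ∑ i, ∑ m, B i m * Real.sin (θ i - θ m) = 0 :=
    anti_sum_zero n B hB Real.sin (fun x => Real.sin_neg x) θ
  have h1 : ∑ i, (p_l i - p_g i) = 0 := by
    rw [← Finset.sum_congr rfl (fun i _ => hDC i)]; exact hid
  have h2 : ∑ i, ∑ m, (G i m * Real.cos (θ i - θ m) + B i m * Real.sin (θ i - θ m)) = 0 := by
    rw [Finset.sum_congr rfl (fun i _ => hAC i)]; exact h1
  have := h2
  simp only [Finset.sum_add_distrib] at this
  linarith [hsin]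
end

section
/- Let G, B : Fin n → Fin n → ℝ be symmetric, with G i m ≥ 0 for all i ≠ m, G i₀ m₀ > 0 for some i₀ ≠ m₀, and |θ i − θ m| < π/2 for all i, m. If both the AC (unit-voltage) and DC power balance equations hold at every bus for the same injections, then False. -/
theorem network_infeasible (n : ℕ) (G B : Fin n → Fin n → ℝ) (θ : Fin n → ℝ)
    (c : Fin n → ℝ)
    (hG : ∀ i m, G i m = G m i) (hB : ∀ i m, B i m = B m i)
    (hGoff : ∀ i m, i ≠ m → G i m ≥ 0) (hGdiag : ∀ i, G i i ≥ 0)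
    (i₀ m₀ : Fin n) (hne : i₀ ≠ m₀) (hGpos : G i₀ m₀ > 0)
    (hθ : ∀ i m, |θ i - θ m| < Real.pi / 2)
    (hAC : ∀ i, ∑ m, (G i m * Real.cos (θ i - θ m) + B i m * Real.sin (θ i - θ m)) = c i)
    (hDC : ∀ i, ∑ m, B i m * (θ i - θ m) = c i) : False := by
  have hcos : ∀ i m, 0 < Real.cos (θ i - θ m) := by
    intro i m
    have h := abs_lt.mp (hθ i m)
    exact Real.cos_pos_of_mem_Ioo ⟨by linarith [h.1], h.2⟩
  have hGnn : ∀ i m, 0 ≤ G i m := by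
    intro i m
    by_cases h : i = m
    · subst h; exact hGdiag i
    · exact hGoff i m h
  -- antisymmetric part sums to zero
  set f : Fin n → Fin n → ℝ := fun i m =>
    B i m * Real.sin (θ i - θ m) - B i m * (θ i - θ m) with hf
  have hanti : ∀ i m, f i m = - f m i := by
    intro i m
    simp only [hf]
    have : θ i - θ m = -(θ m - θ i) := by ring
    rw [this, Real.sin_neg, hB i m]
    ring
  have hT : ∑ i, ∑ m, f i m = 0 := by
    have h1 : ∑ i, ∑ m, f i m = ∑ m, ∑ i, f i m := Finset.sum_comm
    have h2 : ∑ m, ∑ i, f i m = - ∑ i, ∑ m, f i m := by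
      rw [← Finset.sum_neg_distrib]
      refine Finset.sum_congr rfl fun i _ => ?_
      rw [← Finset.sum_neg_distrib]
      exact Finset.sum_congr rfl fun m _ => by rw [hanti m i]
    linarith [h1, h2]
  have hzero : ∑ i, ∑ m, G i m * Real.cos (θ i - θ m) = 0 := by
    have h3 : ∑ i, ∑ m, (G i m * Real.cos (θ i - θ m) + f i m) = 0 := by
      have : ∀ i, ∑ m, (G i m * Real.cos (θ i - θ m) + f i m) = 0 := by
        intro i
        have := hAC i
        have := hDC i
        simp only [hf]
        rw [show (fun m => (G i m * Real.cos (θ i - θ m) +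
            (B i m * Real.sin (θ i - θ m) - B i m * (θ i - θ m)))) = fun m =>
            ((G i m * Real.cos (θ i - θ m) + B i m * Real.sin (θ i - θ m)) -
            B i m * (θ i - θ m)) from funext fun m => by ring]
        rw [Finset.sum_sub_distrib, hAC i, hDC i]
        ring
      simp [this]
    have h4 : ∑ i, ∑ m, (G i m * Real.cos (θ i - θ m) + f i m) =
        (∑ i, ∑ m, G i m * Real.cos (θ i - θ m)) + ∑ i, ∑ m, f i m := by
      rw [← Finset.sum_add_distrib]
      exact Finset.sum_congr rfl fun i _ => Finset.sum_add_distrib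
    linarith [h3, h4, hT]
  have hpos : 0 < ∑ i, ∑ m, G i m * Real.cos (θ i - θ m) := by
    refine Finset.sum_pos' (fun i _ => Finset.sum_nonneg fun m _ =>
      mul_nonneg (hGnn i m) (hcos i m).le) ⟨i₀, Finset.mem_univ _, ?_⟩
    exact Finset.sum_pos' (fun m _ => mul_nonneg (hGnn i₀ m) (hcos i₀ m).le)
      ⟨m₀, Finset.mem_univ _, mul_pos hGpos (hcos i₀ m₀)⟩
  linarith
end
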